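/- Let ρ be a density matrix on C^d ⊗ C^d and let A, B be d×d Hermitian matrices with A² = I and B² = I. Define vectors a, b ∈ R^{2d²} by taking the real and imaginary parts of the entries of (A ⊗ I)·√ρ and (I ⊗ B)·√ρ respectively. Then a and b are unit vectors and ⟨a, b⟩ = Tr((A ⊗ B)·ρ). -/

import Mathlib

open Matrix
open scoped Kronecker ComplexOrder

noncomputable section

/-- The positive semidefinite square root of a positive semidefinite matrix
(the definition of Mathlib of December 2024, since removed). -/
def Matrix.PosSemidef.sqrt {n 𝕜 : Type*} [Fintype n] [DecidableEq n] [RCLike 𝕜]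
    {A : Matrix n n 𝕜} (hA : A.PosSemidef) : Matrix n n 𝕜 :=
  hA.1.eigenvectorUnitary.1 * diagonal ((↑) ∘ (√·) ∘ hA.1.eigenvalues) *
  (star hA.1.eigenvectorUnitary : Matrix n n 𝕜)

lemma Matrix.PosSemidef.sqrt_conjTranspose {n 𝕜 : Type*} [Fintype n] [DecidableEq n] [RCLike 𝕜]
    {A : Matrix n n 𝕜} (hA : A.PosSemidef) : hA.sqrtᴴ = hA.sqrt := by
  unfold Matrix.PosSemidef.sqrt
  have hD : (diagonal ((RCLike.ofReal : ℝ → 𝕜) ∘ (√·) ∘ hA.1.eigenvalues))ᴴ =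
      diagonal ((RCLike.ofReal : ℝ → 𝕜) ∘ (√·) ∘ hA.1.eigenvalues) := by
    rw [diagonal_conjTranspose]
    congr 1
    funext i
    simp
  rw [conjTranspose_mul, conjTranspose_mul, hD, Matrix.mul_assoc]
  simp only [← star_eq_conjTranspose, star_star]

lemma Matrix.PosSemidef.sqrt_mul_self {n 𝕜 : Type*} [Fintype n] [DecidableEq n] [RCLike 𝕜]
    {A : Matrix n n 𝕜} (hA : A.PosSemidef) : hA.sqrt * hA.sqrt = A := by
  unfold Matrix.PosSemidef.sqrt
  conv_rhs => rw [hA.1.spectral_theorem, Unitary.conjStarAlgAut_apply]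
  have hU : (star hA.1.eigenvectorUnitary : Matrix n n 𝕜) * hA.1.eigenvectorUnitary.1 = 1 :=
    Unitary.coe_star_mul_self _
  simp only [Matrix.mul_assoc]
  rw [← Matrix.mul_assoc (star _ : Matrix n n 𝕜) hA.1.eigenvectorUnitary.1, hU, Matrix.one_mul,
    ← Matrix.mul_assoc (diagonal _), diagonal_mul_diagonal]
  congr 2
  congr 1
  funext i
  simp only [Function.comp_apply]
  rw [← RCLike.ofReal_mul, Real.mul_self_sqrt (hA.eigenvalues_nonneg i)]

lemma kron_conjTranspose {d : ℕ} (A B : Matrix (Fin d) (Fin d) ℂ) :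
    (A ⊗ₖ B)ᴴ = Aᴴ ⊗ₖ Bᴴ := by
  ext ⟨i, j⟩ ⟨k, l⟩
  simp [conjTranspose_apply, Matrix.kroneckerMap_apply, mul_comm]

lemma sum_re_mul {d : ℕ} (M N : Matrix (Fin d × Fin d) (Fin d × Fin d) ℂ) :
    (∑ i, ∑ j, ((M i j).re * (N i j).re + (M i j).im * (N i j).im) : ℝ) =
      ((M * Nᴴ).trace).re := by
  rw [Matrix.trace, Complex.re_sum]
  refine Finset.sum_congr rfl fun i _ => ?_
  rw [Matrix.diag_apply, Matrix.mul_apply, Complex.re_sum]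
  refine Finset.sum_congr rfl fun j _ => ?_
  simp [conjTranspose_apply, Complex.mul_re]

/-- Let ρ be a density matrix on ℂ^d ⊗ ℂ^d and A, B Hermitian d×d matrices with
A² = I, B² = I. The real vectors a, b formed by the real and imaginary parts of
the entries of (A ⊗ I)·√ρ and (I ⊗ B)·√ρ are unit vectors, and
⟨a,b⟩ = Tr((A ⊗ B)·ρ). -/
theorem stmt_18 (d : ℕ) (ρ : Matrix (Fin d × Fin d) (Fin d × Fin d) ℂ)
    (hρ : ρ.PosSemidef) (htr : ρ.trace = 1)
    (A B : Matrix (Fin d) (Fin d) ℂ) (hA : A.IsHermitian) (hB : B.IsHermitian)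
    (hA2 : A * A = 1) (hB2 : B * B = 1)
    (MA MB : Matrix (Fin d × Fin d) (Fin d × Fin d) ℂ)
    (hMA : MA = (A ⊗ₖ (1 : Matrix (Fin d) (Fin d) ℂ)) * hρ.sqrt)
    (hMB : MB = ((1 : Matrix (Fin d) (Fin d) ℂ) ⊗ₖ B) * hρ.sqrt) :
    (∑ i, ∑ j, ((MA i j).re ^ 2 + (MA i j).im ^ 2) = 1) ∧
    (∑ i, ∑ j, ((MB i j).re ^ 2 + (MB i j).im ^ 2) = 1) ∧
    ((∑ i, ∑ j, ((MA i j).re * (MB i j).re + (MA i j).im * (MB i j).im) : ℝ) : ℂ) =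
      ((A ⊗ₖ B) * ρ).trace := by
  have hsqH : hρ.sqrtᴴ = hρ.sqrt := hρ.sqrt_conjTranspose
  have hsq : hρ.sqrt * hρ.sqrt = ρ := hρ.sqrt_mul_self
  -- traces of M * Mᴴ
  have hAH : Aᴴ = A := hA
  have hBH : Bᴴ = B := hB
  have key : ∀ X Y : Matrix (Fin d × Fin d) (Fin d × Fin d) ℂ,
      ((X * hρ.sqrt) * (hρ.sqrt * Y)).trace = (ρ * (Y * X)).trace := by
    intro X Y
    have h : (X * hρ.sqrt) * (hρ.sqrt * Y) = X * ρ * Y := by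
      rw [Matrix.mul_assoc, ← Matrix.mul_assoc hρ.sqrt, hsq, ← Matrix.mul_assoc]
    rw [h, Matrix.trace_mul_cycle, Matrix.trace_mul_comm]
  have h1 : (MA * MAᴴ).trace = 1 := by
    rw [hMA, conjTranspose_mul, hsqH, kron_conjTranspose, hAH, conjTranspose_one, key,
      ← Matrix.mul_kronecker_mul, hA2, Matrix.one_mul, Matrix.one_kronecker_one,
      Matrix.mul_one, htr]
  have h2 : (MB * MBᴴ).trace = 1 := by
    rw [hMB, conjTranspose_mul, hsqH, kron_conjTranspose, hBH, conjTranspose_one, key,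
      ← Matrix.mul_kronecker_mul, hB2, Matrix.one_mul, Matrix.one_kronecker_one,
      Matrix.mul_one, htr]
  have h3 : (MA * MBᴴ).trace = ((A ⊗ₖ B) * ρ).trace := by
    rw [hMA, hMB, conjTranspose_mul, hsqH, kron_conjTranspose, hBH, conjTranspose_one, key,
      ← Matrix.mul_kronecker_mul, Matrix.one_mul, Matrix.mul_one, Matrix.trace_mul_comm]
  -- the trace in h3 is real
  have hreal : (((A ⊗ₖ B) * ρ).trace).im = 0 := by
    have hst : star (((A ⊗ₖ B) * ρ).trace) = ((A ⊗ₖ B) * ρ).trace := by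
      have : (((A ⊗ₖ B) * ρ)ᴴ).trace = star (((A ⊗ₖ B) * ρ).trace) := by
        rw [Matrix.trace_conjTranspose]
      rw [← this, conjTranspose_mul, hρ.isHermitian.eq, kron_conjTranspose, hAH, hBH,
        Matrix.trace_mul_comm]
    have := congrArg Complex.im hst
    simp [Complex.conj_im] at this
    linarith [this]
  refine ⟨?_, ?_, ?_⟩
  · have := sum_re_mul MA MA
    simp only [h1, Complex.one_re] at this
    rw [← this]
    exact Finset.sum_congr rfl fun i _ => Finset.sum_congr rfl fun j _ => by ring
  · have := sum_re_mul MB MB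
    simp only [h2, Complex.one_re] at this
    rw [← this]
    exact Finset.sum_congr rfl fun i _ => Finset.sum_congr rfl fun j _ => by ring
  · rw [sum_re_mul MA MB, h3]
    exact Complex.ext (by simp) (by simp [hreal])

end
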